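/- For any integers n ≥ q ≥ 3, there exists a connected 3-hypergraph H of size n such that (I(H)^∨)^2 has an associated prime of height q. -/

import Mathlib

open MvPolynomial Finset

noncomputable section

/-- A `k`-cover of a hypergraph with edge set `E`: a nonzero tuple whose entries
sum to at least `k` over every edge. -/
def IsCover {V : Type*} (E : Finset (Finset V)) (k : ℕ) (a : V → ℕ) : Prop :=
  a ≠ 0 ∧ ∀ e ∈ E, k ≤ ∑ i ∈ e, a i

/-- `a` is a sum of two 1-covers. -/
def SumTwoOneCovers {V : Type*} (E : Finset (Finset V)) (a : V → ℕ) : Prop :=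
  ∃ b c : V → ℕ, IsCover E 1 b ∧ IsCover E 1 c ∧ a = b + c

/-- An independent set: no edge is contained in `S`. -/
def IsIndep {V : Type*} (E : Finset (Finset V)) (S : Finset V) : Prop :=
  ∀ e ∈ E, ¬ e ⊆ S

/-- `i` is in the neighborhood of `S`: `i ∉ S` and some edge consists of `i`
together with vertices of `S`. -/
def InNbhd {V : Type*} (E : Finset (Finset V)) (S : Finset V) (i : V) : Prop :=
  i ∉ S ∧ ∃ e ∈ E, i ∈ e ∧ ∀ j ∈ e, j ≠ i → j ∈ S

open Classical in
/-- The 2-cover `A_S` attached to an independent set `S`: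
`0` on `S`, `2` on `N(S)`, and `1` elsewhere. -/
noncomputable def indepCover {V : Type*} (E : Finset (Finset V)) (S : Finset V) : V → ℕ :=
  fun i => if i ∈ S then 0 else if InNbhd E S i then 2 else 1

/-- The Alexander dual of the edge ideal: `⋂_{edges e} (x_i : i ∈ e)`. -/
noncomputable def dualIdeal {V : Type*} (K : Type*) [Field K] (E : Finset (Finset V)) :
    Ideal (MvPolynomial V K) :=
  ⨅ e ∈ E, Ideal.span (X '' (e : Set V))

/-- The monomial `x_1^{a_1} ⋯ x_n^{a_n}` attached to a tuple `a`. -/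
noncomputable def coverMonomial {V : Type*} [Fintype V] (K : Type*) [Field K] (a : V → ℕ) :
    MvPolynomial V K :=
  ∏ i, X i ^ a i

/-- Connectedness of a hypergraph: any two vertices are linked by a chain of
vertices in which consecutive vertices share an edge. -/
def HConnected {V : Type*} (E : Finset (Finset V)) : Prop :=
  ∀ x y : V, ∃ l : List V, l.head? = some x ∧ l.getLast? = some y ∧
    l.Chain' fun a b => ∃ e ∈ E, a ∈ e ∧ b ∈ e

/-- The cyclic 3-hypergraph with edges `{x_1,x_2,x_3}, {x_3,x_4,x_5}, …`
(0-based: `{2j, 2j+1, 2j+2}` modulo `n`). -/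
def cyc3 (n : ℕ) (hn : 0 < n) : Finset (Finset (Fin n)) :=
  (Finset.range ((n + 1) / 2)).image fun j =>
    ({⟨(2 * j) % n, Nat.mod_lt _ hn⟩, ⟨(2 * j + 1) % n, Nat.mod_lt _ hn⟩,
      ⟨(2 * j + 2) % n, Nat.mod_lt _ hn⟩} : Finset (Fin n))

/-- The alternating tuple: `1` on odd vertices `x_1, x_3, …` (0-based even
indices), `0` on even vertices. -/
def altCover (n : ℕ) : Fin n → ℕ :=
  fun i => if (i : ℕ) % 2 = 0 then 1 else 0

namespace Stmt16Aux

/-- number of "rim" vertices -/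
def mm (q : ℕ) : ℕ := 2*((q-2)/2)+1

def vtx (n : ℕ) (hn : 0 < n) (a : ℕ) : Fin n := ⟨a % n, Nat.mod_lt _ hn⟩

def jprev (m j : ℕ) : ℕ := if j = 0 then m - 1 else j - 1

def fill (q m j : ℕ) : ℕ := if q = m + 1 then m else m + j % 2

def gadE (n q : ℕ) (hn : 0 < n) : Finset (Finset (Fin n)) :=
  if q = 3 then {({vtx n hn 0, vtx n hn 1, vtx n hn 2} : Finset (Fin n))}
  else (Finset.range (mm q)).image fun j =>
    ({vtx n hn (jprev (mm q) j), vtx n hn j, vtx n hn (fill q (mm q) j)} : Finset (Fin n))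

def attE (n q : ℕ) (hn : 0 < n) : Finset (Finset (Fin n)) :=
  (Finset.Ico q n).image fun v =>
    ({vtx n hn 0, vtx n hn (v-1), vtx n hn v} : Finset (Fin n))

def EE (n q : ℕ) (hn : 0 < n) : Finset (Finset (Fin n)) :=
  gadE n q hn ∪ attE n q hn

def ww (q : ℕ) : ℕ → ℕ := fun a => if a < mm q then 1 else if a < q then 0 else 2

/-- cover property: the support of `b` meets every edge -/
def CovP {n : ℕ} (E : Finset (Finset (Fin n))) (b : Fin n → ℕ) : Prop :=
  ∀ e ∈ E, ∃ v ∈ e, b v ≠ 0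

section facts
variable {n q : ℕ} (hq : 3 ≤ q) (hn : q ≤ n)

lemma mm_eq : mm q = 2*((q-2)/2)+1 := rfl
lemma mm_odd : mm q % 2 = 1 := by have := mm_eq (q:=q); omega
include hq in
lemma mm_lt : mm q < q := by have := mm_eq (q:=q); omega
include hq in
lemma mm_ge : q ≤ mm q + 2 := by have := mm_eq (q:=q); omega
lemma mm_pos : 1 ≤ mm q := by have := mm_eq (q:=q); omega

lemma vtx_val {a : ℕ} (hn0 : 0 < n) (h : a < n) : (vtx n hn0 a).val = a :=
  Nat.mod_eq_of_lt h

end facts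

/-- Arc covering an odd cycle has more than half the arcs. -/
lemma arc_card {m : ℕ} (hm : m % 2 = 1) (B : Finset ℕ) (hB : B ⊆ Finset.range m)
    (h : ∀ j < m, jprev m j ∈ B ∨ j ∈ B) : m + 1 ≤ 2 * B.card := by
  classical
  set D := Finset.range m \ B with hD
  have hmap : ∀ j ∈ D, (if j = m - 1 then 0 else j + 1) ∈ B := by
    intro j hj
    simp only [hD, Finset.mem_sdiff, Finset.mem_range] at hj
    obtain ⟨hjm, hjB⟩ := hj
    by_cases hjtop : j = m - 1
    · rcases h 0 (by omega) with h0 | h0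
      · have : jprev m 0 = m - 1 := by simp [jprev]
        rw [this] at h0
        exact absurd h0 (by rw [hjtop] at hjB; exact hjB)
      · simp [hjtop, h0]
    · rcases h (j+1) (by omega) with h0 | h0
      · have : jprev m (j+1) = j := by simp [jprev]
        rw [this] at h0
        exact absurd h0 hjB
      · simp [hjtop, h0]
  have hinj : Set.InjOn (fun j => if j = m - 1 then 0 else j + 1) D := by
    intro a ha b hb hab
    simp only [hD, Finset.coe_sdiff, Set.mem_diff, Finset.mem_coe, Finset.mem_range] at ha hb
    simp only at hab
    split_ifs at hab with h1 h2 h2 <;> omega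
  have hcard : D.card ≤ B.card := Finset.card_le_card_of_injOn _ hmap hinj
  have hDcard : D.card = m - B.card := by
    rw [hD, Finset.card_sdiff_of_subset hB, Finset.card_range]
  have hBle : B.card ≤ m := by simpa [Finset.card_range] using Finset.card_le_card hB
  omega


/-- membership of gadget edges in EE -/
lemma gad_mem {n q : ℕ} (hn0 : 0 < n) {j : ℕ} (hj : j < mm q) (hq3 : q ≠ 3) :
    ({vtx n hn0 (jprev (mm q) j), vtx n hn0 j, vtx n hn0 (fill q (mm q) j)} : Finset (Fin n)) ∈
      EE n q hn0 := by
  apply Finset.mem_union_left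
  unfold gadE
  rw [if_neg hq3]
  exact Finset.mem_image.2 ⟨j, Finset.mem_range.2 hj, rfl⟩

lemma gad3_mem {n : ℕ} (hn0 : 0 < n) :
    ({vtx n hn0 0, vtx n hn0 1, vtx n hn0 2} : Finset (Fin n)) ∈ EE n 3 hn0 := by
  apply Finset.mem_union_left
  unfold gadE
  simp

lemma att_mem {n q : ℕ} (hn0 : 0 < n) {v : ℕ} (h1 : q ≤ v) (h2 : v < n) :
    ({vtx n hn0 0, vtx n hn0 (v-1), vtx n hn0 v} : Finset (Fin n)) ∈ EE n q hn0 := by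
  apply Finset.mem_union_right
  exact Finset.mem_image.2 ⟨v, Finset.mem_Ico.2 ⟨h1, h2⟩, rfl⟩

/-- a cover that vanishes on the fillers hits the rim in an arc pattern -/
lemma cover_arcs {n q : ℕ} (hq : 3 ≤ q) (hn : q ≤ n) (hn0 : 0 < n) (b : Fin n → ℕ)
    (hb : CovP (EE n q hn0) b)
    (hz : ∀ v : Fin n, mm q ≤ v.val → v.val < q → b v = 0) :
    ∀ j < mm q, jprev (mm q) j ∈ (Finset.range (mm q)).filter (fun j => b (vtx n hn0 j) ≠ 0)
      ∨ j ∈ (Finset.range (mm q)).filter (fun j => b (vtx n hn0 j) ≠ 0) := by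
  intro j hj
  have hmlt : mm q < q := mm_lt hq
  have hjq : jprev (mm q) j < mm q := by unfold jprev; split <;> omega
  by_cases hq3 : q = 3
  · subst hq3
    have hm1 : mm 3 = 1 := rfl
    rw [hm1] at hj
    interval_cases j
    obtain ⟨v, hv, hbv⟩ := hb _ (gad3_mem hn0)
    simp only [Finset.mem_insert, Finset.mem_singleton] at hv
    rcases hv with rfl | rfl | rfl
    · right
      simp only [Finset.mem_filter, Finset.mem_range]
      exact ⟨by omega, hbv⟩
    · exact absurd (hz _ (by rw [vtx_val hn0 (by omega)]; omega)
        (by rw [vtx_val hn0 (by omega)]; omega)) hbv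
    · exact absurd (hz _ (by rw [vtx_val hn0 (by omega)]; omega)
        (by rw [vtx_val hn0 (by omega)]; omega)) hbv
  · obtain ⟨v, hv, hbv⟩ := hb _ (gad_mem hn0 hj hq3)
    have hfill : mm q ≤ fill q (mm q) j ∧ fill q (mm q) j < q := by
      have := mm_ge hq
      unfold fill; split <;> omega
    simp only [Finset.mem_insert, Finset.mem_singleton] at hv
    rcases hv with rfl | rfl | rfl
    · left
      simp only [Finset.mem_filter, Finset.mem_range]
      exact ⟨hjq, hbv⟩
    · right
      simp only [Finset.mem_filter, Finset.mem_range]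
      exact ⟨hj, hbv⟩
    · exact absurd (hz _ (by rw [vtx_val hn0 (by omega)]; exact hfill.1)
        (by rw [vtx_val hn0 (by omega)]; exact hfill.2)) hbv

lemma noTwoCovers {n q : ℕ} (hq : 3 ≤ q) (hn : q ≤ n) (hn0 : 0 < n)
    (b c : Fin n → ℕ)
    (hb : CovP (EE n q hn0) b) (hc : CovP (EE n q hn0) c)
    (hle : ∀ v : Fin n, v.val < q → b v + c v ≤ ww q v.val) : False := by
  classical
  have hmlt : mm q < q := mm_lt hq
  have hzb : ∀ v : Fin n, mm q ≤ v.val → v.val < q → b v = 0 := by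
    intro v h1 h2
    have := hle v h2
    simp only [ww] at this
    split_ifs at this <;> omega
  have hzc : ∀ v : Fin n, mm q ≤ v.val → v.val < q → c v = 0 := by
    intro v h1 h2
    have := hle v h2
    simp only [ww] at this
    split_ifs at this <;> omega
  set Bs := (Finset.range (mm q)).filter (fun j => b (vtx n hn0 j) ≠ 0) with hBs
  set Cs := (Finset.range (mm q)).filter (fun j => c (vtx n hn0 j) ≠ 0) with hCs
  have hBarc := cover_arcs hq hn hn0 b hb hzb
  have hCarc := cover_arcs hq hn hn0 c hc hzc
  have hBcard := arc_card (mm_odd) Bs (Finset.filter_subset _ _) hBarc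
  have hCcard := arc_card (mm_odd) Cs (Finset.filter_subset _ _) hCarc
  have hdisj : Disjoint Bs Cs := by
    rw [Finset.disjoint_left]
    intro j hjB hjC
    simp only [hBs, hCs, Finset.mem_filter, Finset.mem_range] at hjB hjC
    have hv : (vtx n hn0 j).val = j := vtx_val hn0 (by omega)
    have := hle (vtx n hn0 j) (by omega)
    simp only [ww, hv] at this
    rw [if_pos hjB.1] at this
    omega
  have hunion : (Bs ∪ Cs).card ≤ mm q := by
    calc (Bs ∪ Cs).card ≤ (Finset.range (mm q)).card :=
        Finset.card_le_card (Finset.union_subset (Finset.filter_subset _ _)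
          (Finset.filter_subset _ _))
    _ = mm q := Finset.card_range _
  rw [Finset.card_union_of_disjoint hdisj] at hunion
  omega


lemma delta_step (m t j : ℕ) (ht : t < m) (hj : j < m) :
    (if t ≤ jprev m j then jprev m j - t else jprev m j + m - t) =
      (if (if t ≤ j then j - t else j + m - t) = 0 then m - 1
       else (if t ≤ j then j - t else j + m - t) - 1) := by
  unfold jprev; split_ifs <;> omega

lemma gad_cases {n q : ℕ} (hn0 : 0 < n) {e : Finset (Fin n)} (he : e ∈ gadE n q hn0) :
    (q = 3 ∧ e = {vtx n hn0 0, vtx n hn0 1, vtx n hn0 2}) ∨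
    (q ≠ 3 ∧ ∃ j < mm q, e = {vtx n hn0 (jprev (mm q) j), vtx n hn0 j,
        vtx n hn0 (fill q (mm q) j)}) := by
  unfold gadE at he
  by_cases hq3 : q = 3
  · rw [if_pos hq3] at he
    exact Or.inl ⟨hq3, Finset.mem_singleton.1 he⟩
  · rw [if_neg hq3] at he
    obtain ⟨j, hj, rfl⟩ := Finset.mem_image.1 he
    exact Or.inr ⟨hq3, j, Finset.mem_range.1 hj, rfl⟩

lemma att_cases {n q : ℕ} (hn0 : 0 < n) {e : Finset (Fin n)} (he : e ∈ attE n q hn0) :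
    ∃ v, q ≤ v ∧ v < n ∧ e = {vtx n hn0 0, vtx n hn0 (v-1), vtx n hn0 v} := by
  obtain ⟨v, hv, rfl⟩ := Finset.mem_image.1 he
  rw [Finset.mem_Ico] at hv
  exact ⟨v, hv.1, hv.2, rfl⟩

set_option maxHeartbeats 2000000 in
lemma decomp {n q : ℕ} (hq : 3 ≤ q) (hn : q ≤ n) (hn0 : 0 < n) (i₀ : ℕ) (hi : i₀ < q) :
    ∃ b c : Fin n → ℕ, CovP (EE n q hn0) b ∧ CovP (EE n q hn0) c ∧
      ∀ v : Fin n, b v + c v ≤ ww q v.val + (if v.val = i₀ then 1 else 0) := by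
  classical
  have hmlt : mm q < q := mm_lt hq
  have hmge : q ≤ mm q + 2 := mm_ge hq
  have hmodd : mm q % 2 = 1 := mm_odd
  set m := mm q with hm
  by_cases hrep : i₀ < m
  · -- rep case
    refine ⟨fun v => if q ≤ v.val then 1 else
        if v.val < m ∧ (if i₀ ≤ v.val then v.val - i₀ else v.val + m - i₀) % 2 = 0 then 1 else 0,
      fun v => if q ≤ v.val then 1 else
        if v.val < m ∧ ((if i₀ ≤ v.val then v.val - i₀ else v.val + m - i₀) % 2 = 1 ∨
          (if i₀ ≤ v.val then v.val - i₀ else v.val + m - i₀) = 0) then 1 else 0, ?_, ?_, ?_⟩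
    · intro e he
      rcases Finset.mem_union.1 he with hg | ha
      · rcases gad_cases hn0 hg with ⟨hq3, rfl⟩ | ⟨hq3, j, hj, rfl⟩
        · have hm3 : m = 1 := by rw [hq3] at hm; exact hm
          refine ⟨vtx n hn0 0, Finset.mem_insert_self _ _, ?_⟩
          beta_reduce
          rw [vtx_val hn0 (by omega)]
          split_ifs <;> omega
        · have hjp : jprev m j < m := by unfold jprev; split <;> omega
          have hstep := delta_step m i₀ j hrep hj
          by_cases hpar : (if i₀ ≤ j then j - i₀ else j + m - i₀) % 2 = 0
          · refine ⟨vtx n hn0 j, Finset.mem_insert_of_mem (Finset.mem_insert_self _ _), ?_⟩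
            beta_reduce
            rw [vtx_val hn0 (by omega)]
            split_ifs at hstep hpar ⊢ <;> omega
          · refine ⟨vtx n hn0 (jprev m j), Finset.mem_insert_self _ _, ?_⟩
            beta_reduce
            rw [vtx_val hn0 (by omega)]
            split_ifs at hstep hpar ⊢ <;> omega
      · obtain ⟨v, hv1, hv2, rfl⟩ := att_cases hn0 ha
        refine ⟨vtx n hn0 v, Finset.mem_insert_of_mem (Finset.mem_insert_of_mem
          (Finset.mem_singleton_self _)), ?_⟩
        beta_reduce
        rw [vtx_val hn0 hv2]
        split_ifs <;> omega
    · intro e he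
      rcases Finset.mem_union.1 he with hg | ha
      · rcases gad_cases hn0 hg with ⟨hq3, rfl⟩ | ⟨hq3, j, hj, rfl⟩
        · have hm3 : m = 1 := by rw [hq3] at hm; exact hm
          refine ⟨vtx n hn0 0, Finset.mem_insert_self _ _, ?_⟩
          beta_reduce
          rw [vtx_val hn0 (by omega)]
          split_ifs <;> omega
        · have hjp : jprev m j < m := by unfold jprev; split <;> omega
          have hstep := delta_step m i₀ j hrep hj
          by_cases hpar : (if i₀ ≤ j then j - i₀ else j + m - i₀) % 2 = 1 ∨
              (if i₀ ≤ j then j - i₀ else j + m - i₀) = 0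
          · refine ⟨vtx n hn0 j, Finset.mem_insert_of_mem (Finset.mem_insert_self _ _), ?_⟩
            beta_reduce
            rw [vtx_val hn0 (by omega)]
            split_ifs at hstep hpar ⊢ <;> omega
          · refine ⟨vtx n hn0 (jprev m j), Finset.mem_insert_self _ _, ?_⟩
            beta_reduce
            rw [vtx_val hn0 (by omega)]
            split_ifs at hstep hpar ⊢ <;> omega
      · obtain ⟨v, hv1, hv2, rfl⟩ := att_cases hn0 ha
        refine ⟨vtx n hn0 v, Finset.mem_insert_of_mem (Finset.mem_insert_of_mem
          (Finset.mem_singleton_self _)), ?_⟩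
        beta_reduce
        rw [vtx_val hn0 hv2]
        split_ifs <;> omega
    · intro v
      beta_reduce
      simp only [ww]
      split_ifs <;> omega
  · -- filler case
    set j0 := if i₀ = m + 1 ∧ q ≠ 3 then 1 else 0 with hj0
    have hj0m : j0 < m := by
      rw [hj0]; split_ifs with h
      · -- i₀ = m+1, q ≠ 3 : then q = m+2 and m ≥ 2
        have : q = m + 2 := by omega
        by_contra hc
        have hm1 : m = 1 := by omega
        exact h.2 (by omega)
      · omega
    refine ⟨fun v => if q ≤ v.val then 1 else if v.val = i₀ then 1 else
        if v.val < m ∧ (if j0 ≤ v.val then v.val - j0 else v.val + m - j0) % 2 = 1 then 1 else 0,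
      fun v => if q ≤ v.val then 1 else
        if v.val < m ∧ (if j0 ≤ v.val then v.val - j0 else v.val + m - j0) % 2 = 0
          then 1 else 0, ?_, ?_, ?_⟩
    · intro e he
      rcases Finset.mem_union.1 he with hg | ha
      · rcases gad_cases hn0 hg with ⟨hq3, rfl⟩ | ⟨hq3, j, hj, rfl⟩
        · -- q = 3 : i₀ ∈ {1,2}; the unique edge contains vtx i₀
          have hm3 : m = 1 := by rw [hq3] at hm; exact hm
          have : i₀ = 1 ∨ i₀ = 2 := by omega
          rcases this with h1 | h2
          · refine ⟨vtx n hn0 1, Finset.mem_insert_of_mem (Finset.mem_insert_self _ _), ?_⟩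
            beta_reduce
            rw [vtx_val hn0 (by omega)]
            split_ifs <;> omega
          · refine ⟨vtx n hn0 2, Finset.mem_insert_of_mem (Finset.mem_insert_of_mem
              (Finset.mem_singleton_self _)), ?_⟩
            beta_reduce
            rw [vtx_val hn0 (by omega)]
            split_ifs <;> omega
        · by_cases hjj : j = j0
          · -- the filler of edge j0 is i₀
            have hfe : fill q m j0 = i₀ := by
              unfold fill
              rw [hj0]
              split_ifs <;> omega
            refine ⟨vtx n hn0 (fill q m j), Finset.mem_insert_of_mem
              (Finset.mem_insert_of_mem (Finset.mem_singleton_self _)), ?_⟩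
            beta_reduce
            rw [hjj, hfe, vtx_val hn0 (by omega)]
            split_ifs <;> omega
          · have hjp : jprev m j < m := by unfold jprev; split <;> omega
            have hstep := delta_step m j0 j hj0m hj
            by_cases hpar : (if j0 ≤ j then j - j0 else j + m - j0) % 2 = 1
            · refine ⟨vtx n hn0 j, Finset.mem_insert_of_mem (Finset.mem_insert_self _ _), ?_⟩
              beta_reduce
              rw [vtx_val hn0 (by omega)]
              split_ifs at hstep hpar ⊢ <;> omega
            · -- δ' j even and ≠ 0 (since j ≠ j0)
              have hne : (if j0 ≤ j then j - j0 else j + m - j0) ≠ 0 := by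
                split_ifs <;> omega
              refine ⟨vtx n hn0 (jprev m j), Finset.mem_insert_self _ _, ?_⟩
              beta_reduce
              rw [vtx_val hn0 (by omega)]
              split_ifs at hne hstep hpar ⊢ <;> omega
      · obtain ⟨v, hv1, hv2, rfl⟩ := att_cases hn0 ha
        refine ⟨vtx n hn0 v, Finset.mem_insert_of_mem (Finset.mem_insert_of_mem
          (Finset.mem_singleton_self _)), ?_⟩
        beta_reduce
        rw [vtx_val hn0 hv2]
        split_ifs <;> omega
    · intro e he
      rcases Finset.mem_union.1 he with hg | ha
      · rcases gad_cases hn0 hg with ⟨hq3, rfl⟩ | ⟨hq3, j, hj, rfl⟩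
        · have hm3 : m = 1 := by rw [hq3] at hm; exact hm
          have hj00 : j0 = 0 := by rw [hj0]; split_ifs with h <;> [exact absurd hq3 h.2; rfl]
          refine ⟨vtx n hn0 0, Finset.mem_insert_self _ _, ?_⟩
          beta_reduce
          rw [vtx_val hn0 (by omega), hj00]
          split_ifs <;> omega
        · have hjp : jprev m j < m := by unfold jprev; split <;> omega
          have hstep := delta_step m j0 j hj0m hj
          by_cases hpar : (if j0 ≤ j then j - j0 else j + m - j0) % 2 = 0
          · refine ⟨vtx n hn0 j, Finset.mem_insert_of_mem (Finset.mem_insert_self _ _), ?_⟩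
            beta_reduce
            rw [vtx_val hn0 (by omega)]
            split_ifs at hstep hpar ⊢ <;> omega
          · refine ⟨vtx n hn0 (jprev m j), Finset.mem_insert_self _ _, ?_⟩
            beta_reduce
            rw [vtx_val hn0 (by omega)]
            split_ifs at hstep hpar ⊢ <;> omega
      · obtain ⟨v, hv1, hv2, rfl⟩ := att_cases hn0 ha
        refine ⟨vtx n hn0 v, Finset.mem_insert_of_mem (Finset.mem_insert_of_mem
          (Finset.mem_singleton_self _)), ?_⟩
        beta_reduce
        rw [vtx_val hn0 hv2]
        split_ifs <;> omega
    · intro v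
      beta_reduce
      simp only [ww]
      split_ifs <;> omega


lemma vtx_ne {n a b : ℕ} (hn0 : 0 < n) (ha : a < n) (hb : b < n) (h : a ≠ b) :
    vtx n hn0 a ≠ vtx n hn0 b := by
  intro hc
  apply h
  have := congrArg Fin.val hc
  rwa [vtx_val hn0 ha, vtx_val hn0 hb] at this

lemma mm_ge3 {q : ℕ} (hq : 3 ≤ q) (hq3 : q ≠ 3) : 3 ≤ mm q := by
  have := mm_eq (q := q); omega

lemma card3 {n q : ℕ} (hq : 3 ≤ q) (hn : q ≤ n) (hn0 : 0 < n) :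
    ∀ e ∈ EE n q hn0, e.card = 3 := by
  intro e he
  rcases Finset.mem_union.1 he with hg | ha
  · rcases gad_cases hn0 hg with ⟨hq3, rfl⟩ | ⟨hq3, j, hj, rfl⟩
    · refine Finset.card_eq_three.2 ⟨_, _, _, ?_, ?_, ?_, rfl⟩ <;>
        apply vtx_ne hn0 (by omega) (by omega) (by omega)
    · have hm3 : 3 ≤ mm q := mm_ge3 hq hq3
      have hmlt : mm q < q := mm_lt hq
      have hmge : q ≤ mm q + 2 := mm_ge hq
      have h1 : jprev (mm q) j < mm q := by unfold jprev; split <;> omega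
      have h2 : jprev (mm q) j ≠ j := by unfold jprev; split <;> omega
      have h3 : mm q ≤ fill q (mm q) j ∧ fill q (mm q) j < q := by unfold fill; split <;> omega
      refine Finset.card_eq_three.2 ⟨_, _, _, ?_, ?_, ?_, rfl⟩ <;>
        apply vtx_ne hn0 (by omega) (by omega) (by omega)
  · obtain ⟨v, hv1, hv2, rfl⟩ := att_cases hn0 ha
    refine Finset.card_eq_three.2 ⟨_, _, _, ?_, ?_, ?_, rfl⟩ <;>
      apply vtx_ne hn0 (by omega) (by omega) (by omega)

lemma zero_mem_edge {n q : ℕ} (hq : 3 ≤ q) (hn : q ≤ n) (hn0 : 0 < n) :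
    ∃ e ∈ EE n q hn0, vtx n hn0 0 ∈ e := by
  by_cases hq3 : q = 3
  · subst hq3
    exact ⟨_, gad3_mem hn0, Finset.mem_insert_self _ _⟩
  · refine ⟨_, gad_mem hn0 (by have := mm_eq (q := q); omega : (0:ℕ) < mm q) hq3, ?_⟩
    exact Finset.mem_insert_of_mem (Finset.mem_insert_self _ _)

/-- every vertex is joined to vertex 0 by an edge chain -/
lemma toZero {n q : ℕ} (hq : 3 ≤ q) (hn : q ≤ n) (hn0 : 0 < n) :
    ∀ a < n, ∃ l : List (Fin n), l.head? = some (vtx n hn0 a) ∧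
      l.getLast? = some (vtx n hn0 0) ∧
      l.Chain' (fun x y => ∃ e ∈ EE n q hn0, x ∈ e ∧ y ∈ e) := by
  have hmlt : mm q < q := mm_lt hq
  have hmge : q ≤ mm q + 2 := mm_eq (q := q) ▸ mm_ge hq
  -- first: the rim, by induction
  have rim : ∀ a, a < mm q → ∃ l : List (Fin n), l.head? = some (vtx n hn0 a) ∧
      l.getLast? = some (vtx n hn0 0) ∧
      l.Chain' (fun x y => ∃ e ∈ EE n q hn0, x ∈ e ∧ y ∈ e) := by
    intro a
    induction a with
    | zero => exact fun _ => ⟨[vtx n hn0 0], rfl, rfl, List.isChain_singleton _⟩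
    | succ a ih =>
      intro ha
      obtain ⟨l, hh, hl, hc⟩ := ih (by omega)
      have hq3 : q ≠ 3 := by
        intro h
        rw [h] at ha
        have : mm 3 = 1 := rfl
        omega
      refine ⟨vtx n hn0 (a+1) :: l, rfl, ?_, ?_⟩
      · rw [List.getLast?_cons, hl]
        cases l with
        | nil => simp at hh
        | cons x t => simp [List.getLast?_cons]
      · rw [List.Chain', List.isChain_cons]
        refine ⟨?_, hc⟩
        intro y hy
        rw [hh] at hy
        simp only [Option.mem_def, Option.some.injEq] at hy
        subst hy
        refine ⟨_, gad_mem hn0 ha hq3, ?_, ?_⟩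
        · exact Finset.mem_insert_of_mem (Finset.mem_insert_self _ _)
        · have : jprev (mm q) (a+1) = a := by unfold jprev; split <;> omega
          rw [this]
          exact Finset.mem_insert_self _ _
  intro a ha
  by_cases har : a < mm q
  · exact rim a har
  · -- one step to 0
    have step : ∃ e ∈ EE n q hn0, vtx n hn0 a ∈ e ∧ vtx n hn0 0 ∈ e := by
      by_cases haq : q ≤ a
      · refine ⟨_, att_mem hn0 haq ha, ?_, Finset.mem_insert_self _ _⟩
        exact Finset.mem_insert_of_mem (Finset.mem_insert_of_mem (Finset.mem_singleton_self _))
      · -- a is a filler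
        by_cases hq3 : q = 3
        · subst hq3
          have : mm 3 = 1 := rfl
          have ha12 : a = 1 ∨ a = 2 := by omega
          refine ⟨_, gad3_mem hn0, ?_, Finset.mem_insert_self _ _⟩
          rcases ha12 with rfl | rfl
          · exact Finset.mem_insert_of_mem (Finset.mem_insert_self _ _)
          · exact Finset.mem_insert_of_mem (Finset.mem_insert_of_mem (Finset.mem_singleton_self _))
        · have hm3 : 3 ≤ mm q := mm_ge3 hq hq3
          -- edge with index j = a - mm q has filler a and contains vtx 0
          set j := a - mm q with hjdef
          have hjm : j < mm q := by omega
          have hfill : fill q (mm q) j = a := by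
            unfold fill
            split <;> omega
          refine ⟨_, gad_mem hn0 hjm hq3, ?_, ?_⟩
          · rw [hfill]
            exact Finset.mem_insert_of_mem (Finset.mem_insert_of_mem (Finset.mem_singleton_self _))
          · -- vtx 0 is jprev or the mid vertex
            by_cases hj0 : j = 0
            · rw [hj0]
              exact Finset.mem_insert_of_mem (Finset.mem_insert_self _ _)
            · have hjone : j = 1 := by omega
              have hjpz : jprev (mm q) j = 0 := by unfold jprev; split <;> omega
              rw [hjpz]
              exact Finset.mem_insert_self _ _
    obtain ⟨e, he, h1, h2⟩ := step
    refine ⟨[vtx n hn0 a, vtx n hn0 0], rfl, rfl, ?_⟩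
    exact List.isChain_pair.2 ⟨e, he, h1, h2⟩


lemma connected {n q : ℕ} (hq : 3 ≤ q) (hn : q ≤ n) (hn0 : 0 < n) :
    ∀ x y : Fin n, ∃ l : List (Fin n), l.head? = some x ∧ l.getLast? = some y ∧
      l.Chain' (fun a b => ∃ e ∈ EE n q hn0, a ∈ e ∧ b ∈ e) := by
  intro x y
  obtain ⟨lx, hxh, hxl, hxc⟩ := toZero hq hn hn0 x.val x.isLt
  obtain ⟨ly, hyh, hyl, hyc⟩ := toZero hq hn hn0 y.val y.isLt
  have hx : vtx n hn0 x.val = x := Fin.ext (vtx_val hn0 x.isLt)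
  have hy : vtx n hn0 y.val = y := Fin.ext (vtx_val hn0 y.isLt)
  rw [hx] at hxh
  rw [hy] at hyh
  have hlyne : ly ≠ [] := by intro h; rw [h] at hyh; simp at hyh
  refine ⟨lx ++ ly.reverse, ?_, ?_, ?_⟩
  · cases lx with
    | nil => simp at hxh
    | cons a t => simpa using hxh
  · rw [List.getLast?_append_of_ne_nil _ (by simpa using hlyne),
      List.getLast?_reverse, hyh]
  · refine List.IsChain.append hxc ?_ ?_
    · exact (List.isChain_reverse).2 (hyc.imp fun a b h =>
        ⟨h.choose, h.choose_spec.1, h.choose_spec.2.2, h.choose_spec.2.1⟩)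
    · intro u hu v hv
      rw [hxl] at hu
      rw [List.head?_reverse, hyl] at hv
      obtain rfl : vtx n hn0 0 = u := by simpa using hu
      obtain rfl : vtx n hn0 0 = v := by simpa using hv
      obtain ⟨e, he, h0⟩ := zero_mem_edge hq hn hn0
      exact ⟨e, he, h0, h0⟩


section algebra
open Pointwise

variable {K : Type*} [Field K] {n q : ℕ}

/-- cover monomials lie in the dual ideal -/
lemma memJ (hn0 : 0 < n) {b : Fin n →₀ ℕ}
    (hb : ∀ e ∈ EE n q hn0, ∃ v ∈ e, b v ≠ 0) :
    (monomial b (1:K)) ∈ dualIdeal K (EE n q hn0) := by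
  unfold dualIdeal
  rw [Ideal.mem_iInf]
  intro e
  rw [Ideal.mem_iInf]
  intro he
  rw [MvPolynomial.mem_ideal_span_X_image]
  intro d hd
  classical
  rw [MvPolynomial.support_monomial, if_neg one_ne_zero, Finset.mem_singleton] at hd
  obtain ⟨v, hv, hbv⟩ := hb e he
  exact ⟨v, hv, by rwa [hd]⟩

lemma J_le_covers (hn0 : 0 < n) :
    dualIdeal K (EE n q hn0) ≤ Ideal.span ((fun d => monomial d (1:K)) ''
      {d : Fin n →₀ ℕ | ∀ e ∈ EE n q hn0, ∃ v ∈ e, d v ≠ 0}) := by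
  intro p hp
  rw [MvPolynomial.mem_ideal_span_monomial_image]
  intro d hd
  refine ⟨d, ?_, le_refl d⟩
  intro e he
  have hpe : p ∈ Ideal.span (X '' (e : Set (Fin n))) := by
    unfold dualIdeal at hp
    rw [Ideal.mem_iInf] at hp
    have := hp e
    rw [Ideal.mem_iInf] at this
    exact this he
  rw [MvPolynomial.mem_ideal_span_X_image] at hpe
  obtain ⟨i, hi, hne⟩ := hpe d hd
  exact ⟨i, hi, hne⟩

lemma Jsq_le (hn0 : 0 < n) :
    (dualIdeal K (EE n q hn0)) ^ 2 ≤ Ideal.span ((fun d => monomial d (1:K)) ''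
      {d : Fin n →₀ ℕ | ∃ b c : Fin n →₀ ℕ,
        (∀ e ∈ EE n q hn0, ∃ v ∈ e, b v ≠ 0) ∧
        (∀ e ∈ EE n q hn0, ∃ v ∈ e, c v ≠ 0) ∧ d = b + c}) := by
  have h1 := J_le_covers (K := K) (q := q) hn0
  calc (dualIdeal K (EE n q hn0)) ^ 2
      = dualIdeal K (EE n q hn0) * dualIdeal K (EE n q hn0) := sq _
    _ ≤ Ideal.span ((fun d => monomial d (1:K)) ''
          {d : Fin n →₀ ℕ | ∀ e ∈ EE n q hn0, ∃ v ∈ e, d v ≠ 0}) *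
        Ideal.span ((fun d => monomial d (1:K)) ''
          {d : Fin n →₀ ℕ | ∀ e ∈ EE n q hn0, ∃ v ∈ e, d v ≠ 0}) :=
      Ideal.mul_mono h1 h1
    _ = Ideal.span (((fun d => monomial d (1:K)) ''
          {d : Fin n →₀ ℕ | ∀ e ∈ EE n q hn0, ∃ v ∈ e, d v ≠ 0}) *
        ((fun d => monomial d (1:K)) ''
          {d : Fin n →₀ ℕ | ∀ e ∈ EE n q hn0, ∃ v ∈ e, d v ≠ 0})) :=
      Ideal.span_mul_span' _ _
    _ ≤ _ := by
      apply Ideal.span_mono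
      rintro x hx
      rw [Set.mem_mul] at hx
      obtain ⟨u, hu, v, hv, rfl⟩ := hx
      obtain ⟨b, hb, rfl⟩ := hu
      obtain ⟨c, hc, rfl⟩ := hv
      refine ⟨b + c, ⟨b, c, hb, hc, rfl⟩, ?_⟩
      simp [MvPolynomial.monomial_mul]


/-- the variable-killing endomorphism -/
def kil (K : Type*) [Field K] (n q : ℕ) : MvPolynomial (Fin n) K →ₐ[K] MvPolynomial (Fin n) K :=
  aeval (fun i : Fin n => if i.val < q then 0 else X i)

lemma kil_coeff (p : MvPolynomial (Fin n) K) (d : Fin n →₀ ℕ)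
    (hd : ∀ i : Fin n, i.val < q → d i = 0) :
    coeff d (kil K n q p) = coeff d p := by
  classical
  unfold kil
  rw [aeval_def, eval₂_eq]
  rw [MvPolynomial.coeff_sum]
  have key : ∀ u ∈ p.support,
      coeff d ((algebraMap K (MvPolynomial (Fin n) K)) (coeff u p) *
        ∏ i ∈ u.support, (if i.val < q then (0 : MvPolynomial (Fin n) K) else X i) ^ u i) =
      if u = d then coeff d p else 0 := by
    intro u hu
    by_cases htouch : ∃ i ∈ u.support, i.val < q
    · obtain ⟨i, hi, hiq⟩ := htouch
      have hzero : ∏ j ∈ u.support, (if j.val < q then (0 : MvPolynomial (Fin n) K) else X j) ^ u j = 0 := by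
        apply Finset.prod_eq_zero hi
        rw [if_pos hiq]
        exact zero_pow (Finsupp.mem_support_iff.1 hi)
      rw [hzero, mul_zero, coeff_zero]
      rw [if_neg]
      intro hud
      subst hud
      exact (Finsupp.mem_support_iff.1 hi) (hd i hiq)
    · push_neg at htouch
      have hprod : ∏ j ∈ u.support, (if j.val < q then (0 : MvPolynomial (Fin n) K) else X j) ^ u j =
          ∏ j ∈ u.support, (X j : MvPolynomial (Fin n) K) ^ u j := by
        apply Finset.prod_congr rfl
        intro j hj
        rw [if_neg (Nat.not_lt.2 (htouch j hj))]
      rw [hprod]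
      have hmon : (monomial u (coeff u p) : MvPolynomial (Fin n) K) =
          (algebraMap K (MvPolynomial (Fin n) K)) (coeff u p) *
            ∏ j ∈ u.support, (X j : MvPolynomial (Fin n) K) ^ u j := by
        rw [MvPolynomial.monomial_eq]
        rfl
      rw [← hmon, MvPolynomial.coeff_monomial]
      by_cases hud : u = d
      · subst hud; simp
      · simp [hud]
  rw [Finset.sum_congr rfl key, Finset.sum_ite_eq' p.support d (fun _ => coeff d p)]
  by_cases hdp : d ∈ p.support
  · rw [if_pos hdp]
  · rw [if_neg hdp, eq_comm]
    exact MvPolynomial.notMem_support_iff.1 hdp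

lemma span_eq_ker (hq : 3 ≤ q) (hn : q ≤ n) (hn0 : 0 < n) :
    Ideal.span (X '' (((Finset.range q).image (vtx n hn0) : Finset (Fin n)) : Set (Fin n))) =
      RingHom.ker (kil K n q).toRingHom := by
  have hSmem : ∀ v : Fin n, v ∈ ((Finset.range q).image (vtx n hn0)) ↔ v.val < q := by
    intro v
    rw [Finset.mem_image]
    constructor
    · rintro ⟨a, ha, rfl⟩
      rw [Finset.mem_range] at ha
      rw [vtx_val hn0 (by omega)]
      exact ha
    · intro hv
      exact ⟨v.val, Finset.mem_range.2 hv, Fin.ext (vtx_val hn0 v.isLt)⟩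
  apply le_antisymm
  · rw [Ideal.span_le]
    rintro x ⟨i, hi, rfl⟩
    rw [SetLike.mem_coe, RingHom.mem_ker]
    show (kil K n q) (X i) = 0
    unfold kil
    rw [aeval_X]
    rw [if_pos ((hSmem i).1 (by exact_mod_cast hi))]
  · intro p hp
    rw [RingHom.mem_ker] at hp
    rw [MvPolynomial.mem_ideal_span_X_image]
    by_contra hcon
    push_neg at hcon
    obtain ⟨d, hd, hd0⟩ := hcon
    have hdz : ∀ i : Fin n, i.val < q → d i = 0 := by
      intro i hi
      exact hd0 i (by exact_mod_cast (hSmem i).2 hi)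
    have : coeff d ((kil K n q) p) = coeff d p := kil_coeff p d hdz
    rw [show (kil K n q) p = (kil K n q).toRingHom p from rfl, hp] at this
    rw [coeff_zero] at this
    exact (MvPolynomial.mem_support_iff.1 hd) this.symm

lemma span_prime (hq : 3 ≤ q) (hn : q ≤ n) (hn0 : 0 < n) :
    (Ideal.span (X '' (((Finset.range q).image (vtx n hn0) : Finset (Fin n)) : Set (Fin n))) :
      Ideal (MvPolynomial (Fin n) K)).IsPrime := by
  rw [span_eq_ker hq hn hn0]
  exact RingHom.ker_isPrime _

end algebra

end Stmt16Aux

open Stmt16Aux in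
theorem stmt16 {K : Type*} [Field K] {n q : ℕ} (hq : 3 ≤ q) (hn : q ≤ n) :
    ∃ E : Finset (Finset (Fin n)), (∀ e ∈ E, e.card = 3) ∧ HConnected E ∧
      ∃ S : Finset (Fin n), S.card = q ∧
        IsAssociatedPrime
          (Ideal.span (X '' (S : Set (Fin n))) : Ideal (MvPolynomial (Fin n) K))
          (MvPolynomial (Fin n) K ⧸ ((dualIdeal K E) ^ 2)) := by
  classical
  have hn0 : 0 < n := by omega
  refine ⟨EE n q hn0, card3 hq hn hn0, connected hq hn hn0,
    (Finset.range q).image (vtx n hn0), ?_, ?_⟩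
  · rw [Finset.card_image_of_injOn, Finset.card_range]
    intro a ha b hb hab
    rw [Finset.mem_coe, Finset.mem_range] at ha hb
    have := congrArg Fin.val hab
    rwa [vtx_val hn0 (by omega), vtx_val hn0 (by omega)] at this
  · have hSmem : ∀ v : Fin n, v ∈ ((Finset.range q).image (vtx n hn0)) ↔ v.val < q := by
      intro v
      rw [Finset.mem_image]
      constructor
      · rintro ⟨a, ha, rfl⟩
        rw [Finset.mem_range] at ha
        rw [vtx_val hn0 (by omega)]
        exact ha
      · intro hv
        exact ⟨v.val, Finset.mem_range.2 hv, Fin.ext (vtx_val hn0 v.isLt)⟩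
    set wF : Fin n →₀ ℕ := Finsupp.equivFunOnFinite.symm (fun v : Fin n => ww q v.val) with hwF
    have hwFv : ∀ v : Fin n, wF v = ww q v.val := fun v => rfl
    set M₀ : MvPolynomial (Fin n) K := monomial wF 1 with hM₀
    -- the colon containment (easy direction)
    have hcolon : Ideal.span (X '' (((Finset.range q).image (vtx n hn0) : Finset (Fin n)) :
        Set (Fin n))) ≤ (dualIdeal K (EE n q hn0) ^ 2).colon (Ideal.span {M₀}) := by
      rw [Ideal.span_le]
      rintro x ⟨i, hiS, rfl⟩
      rw [SetLike.mem_coe, Submodule.mem_colon_span_singleton, smul_eq_mul]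
      obtain ⟨b, c, hbcov, hccov, hsum⟩ := decomp hq hn hn0 i.val
        ((hSmem i).1 (by exact_mod_cast hiS))
      set bF : Fin n →₀ ℕ := Finsupp.equivFunOnFinite.symm b with hbF
      set cF : Fin n →₀ ℕ := Finsupp.equivFunOnFinite.symm c with hcF
      have hbFv : ∀ v : Fin n, bF v = b v := fun v => rfl
      have hcFv : ∀ v : Fin n, cF v = c v := fun v => rfl
      have hXiM : X i * M₀ = monomial (Finsupp.single i 1 + wF) (1:K) := by
        rw [hM₀, X, monomial_mul, one_mul]
      have hle : bF + cF ≤ Finsupp.single i 1 + wF := by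
        rw [Finsupp.le_def]
        intro v
        have hs := hsum v
        rw [Finsupp.add_apply, Finsupp.add_apply, hbFv, hcFv, hwFv, Finsupp.single_apply]
        by_cases hvi : v = i
        · subst hvi
          simp only [if_pos rfl] at hs ⊢
          omega
        · rw [if_neg (fun h => hvi h.symm)]
          rw [if_neg (fun h => hvi (Fin.ext h))] at hs
          omega
      have hfact : (monomial (Finsupp.single i 1 + wF) (1:K)) =
          monomial ((Finsupp.single i 1 + wF) - (bF + cF)) 1 *
            (monomial bF 1 * monomial cF 1) := by
        rw [monomial_mul, monomial_mul, one_mul, one_mul]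
        rw [tsub_add_cancel_of_le hle]
      rw [hXiM, hfact, sq]
      exact Ideal.mul_mem_left _ _ (Ideal.mul_mem_mul (memJ hn0 hbcov) (memJ hn0 hccov))
    refine isAssociatedPrime_iff.2 ⟨span_prime hq hn hn0, Ideal.Quotient.mk (dualIdeal K (EE n q hn0) ^ 2) M₀, ?_⟩
    ext r
    rw [Submodule.mem_colon_singleton, Submodule.mem_bot]
    have hsmul : r • (Ideal.Quotient.mk (dualIdeal K (EE n q hn0) ^ 2) M₀) =
        Ideal.Quotient.mk (dualIdeal K (EE n q hn0) ^ 2) (r * M₀) := rfl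
    rw [hsmul, Ideal.Quotient.eq_zero_iff_mem]
    constructor
    · exact fun hr => Submodule.mem_colon_span_singleton.1 (hcolon hr)
    · intro hr
      by_contra hrP
      have hne : ¬ ∀ d ∈ r.support, ∃ i ∈ ((((Finset.range q).image (vtx n hn0) : Finset (Fin n)) :
          Set (Fin n))), d i ≠ 0 := fun h => hrP (MvPolynomial.mem_ideal_span_X_image.2 h)
      push_neg at hne
      obtain ⟨d, hd, hd0⟩ := hne
      have hco : coeff (d + wF) (r * M₀) = coeff d r := by
        rw [hM₀, MvPolynomial.coeff_mul_monomial', if_pos le_add_self,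
          add_tsub_cancel_right, mul_one]
      have hsupp : d + wF ∈ (r * M₀).support :=
        MvPolynomial.mem_support_iff.2 (by rw [hco]; exact MvPolynomial.mem_support_iff.1 hd)
      obtain ⟨g, hgmem, hgle⟩ :=
        (MvPolynomial.mem_ideal_span_monomial_image.1 (Jsq_le hn0 hr)) _ hsupp
      obtain ⟨b, c, hbcov, hccov, rfl⟩ := hgmem
      refine noTwoCovers hq hn hn0 b c hbcov hccov ?_
      intro v hv
      have h1 : (b + c) v ≤ (d + wF) v := Finsupp.le_def.1 hgle v
      rw [Finsupp.add_apply, Finsupp.add_apply] at h1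
      have hdv : d v = 0 := hd0 v (by exact_mod_cast (hSmem v).2 hv)
      have hwv : wF v = ww q v.val := rfl
      omega
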